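/- If e ∈ Win_a((p,Q)_d) in the weak spectroscopy energy game G△, then there exists a conjunction ⋀Ψ ∈ Strat((p,Q)_d, e) with expr^ε(⋀Ψ) ≤ e. -/

import Mathlib

open Classical

noncomputable section

namespace Spectroscopy

/-! ### Energies and declining energy games -/

/-- Energies: 8-dimensional vectors over `ℕ ∪ {∞}`, ordered componentwise. -/
abbrev Energy : Type := Fin 8 → ℕ∞

/-- The `i`-th unit vector. -/
def unitE (i : Fin 8) : Energy := fun k => if k = i then 1 else 0

/-- The vector with value `v` at position `i` and `0` elsewhere. -/
def onlyAt (i : Fin 8) (v : ℕ∞) : Energy := fun k => if k = i then v else 0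

/-- Components of energy updates: `-1`, `0`, or minimum selection `min_D`.
For the component at position `k`, `minWith D` selects the minimum over the
positions `{k} ∪ D`, so the requirement `k ∈ D` of the paper holds by
construction. -/
inductive UpdComp : Type
  | decr : UpdComp
  | zero : UpdComp
  | minWith (D : Finset (Fin 8)) : UpdComp
deriving DecidableEq

/-- Energy updates. -/
abbrev Update : Type := Fin 8 → UpdComp

/-- Partial application of an update to an energy (`none` when a component
would become negative). -/
def upd (e : Energy) (u : Update) : Option Energy :=
  if ∀ k, u k = UpdComp.decr → e k ≠ 0 then
    some (fun k =>
      match u k with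
      | UpdComp.decr => e k - 1
      | UpdComp.zero => e k
      | UpdComp.minWith D => (insert k D).inf e)
  else none

/-- A declining energy game: positions, a defender predicate (attacker
positions are the non-defender ones), and moves labeled with updates. -/
structure EGame (Pos : Type) where
  defender : Pos → Prop
  move : Pos → Update → Pos → Prop

/-- Attacker winning budgets `Win_a`: at an attacker position some move must
lead to an attacker-won position under the updated energy; at a defender
position every move must (be defined and) lead to an attacker-won position. -/
inductive EGame.Win {Pos : Type} (G : EGame Pos) : Pos → Energy → Prop
  | attack {g : Pos} {u : Update} {g' : Pos} {e e' : Energy} :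
      ¬ G.defender g → G.move g u g' → upd e u = some e' → G.Win g' e' →
      G.Win g e
  | defend {g : Pos} {e : Energy} :
      G.defender g →
      (∀ u g', G.move g u g' → upd e u ≠ none) →
      (∀ u g' e', G.move g u g' → upd e u = some e' → G.Win g' e') →
      G.Win g e

/-! ### Labeled transition systems with silent steps -/

section LTS

variable {Proc Act : Type}

/-- Weak internal steps `↠`: reflexive-transitive closure of `τ`-steps. -/
def Star (Tr : Proc → Act → Proc → Prop) (τ : Act) : Proc → Proc → Prop :=
  Relation.ReflTransGen fun p p' => Tr p τ p'

/-- A process is stable if it has no `τ`-step. -/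
def Stable (Tr : Proc → Act → Proc → Prop) (τ : Act) (p : Proc) : Prop :=
  ∀ p', ¬ Tr p τ p'

/-- Optional step `p →(α) p'`: a real `α`-step, or `α = τ` and `p = p'`. -/
def OptStep (Tr : Proc → Act → Proc → Prop) (τ : Act) (p : Proc) (α : Act) (p' : Proc) : Prop :=
  Tr p α p' ∨ (α = τ ∧ p = p')

/-- Lift of `→a` to sets. -/
def SetStep (Tr : Proc → Act → Proc → Prop) (Q : Set Proc) (a : Act) (Q' : Set Proc) : Prop :=
  Q' = {q' | ∃ q ∈ Q, Tr q a q'}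

/-- Lift of `↠` to sets. -/
def SetStar (Tr : Proc → Act → Proc → Prop) (τ : Act) (Q Q' : Set Proc) : Prop :=
  Q' = {q' | ∃ q ∈ Q, Star Tr τ q q'}

/-- Lift of `→(α)` to sets. -/
def SetOpt (Tr : Proc → Act → Proc → Prop) (τ : Act) (Q : Set Proc) (α : Act)
    (Q' : Set Proc) : Prop :=
  Q' = {q' | ∃ q ∈ Q, OptStep Tr τ q α q'}

end LTS

/-! ### The logic HML_srbb -/

mutual
/-- Formulas `φ` of HML_srbb: `⟨ε⟩χ` or immediate conjunctions `⋀Ψ`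
(conjunctions are indexed by an arbitrary type). `⊤` is the empty conjunction. -/
inductive Formula (Act : Type) (τ : Act) : Type 1
  | delayed : DFormula Act τ → Formula Act τ
  | conj : (I : Type) → (I → Conjunct Act τ) → Formula Act τ

/-- Delayed formulas `χ`: observations `⟨a⟩φ` (with `a ≠ τ`), standard
conjunctions `⋀Ψ`, stable conjunctions `⋀({¬⟨τ⟩⊤} ∪ Ψ)`, and branching
conjunctions `⋀({(α)φ} ∪ Ψ)`. -/
inductive DFormula (Act : Type) (τ : Act) : Type 1
  | obs : (a : Act) → a ≠ τ → Formula Act τ → DFormula Act τ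
  | conj : (I : Type) → (I → Conjunct Act τ) → DFormula Act τ
  | stableConj : (I : Type) → (I → Conjunct Act τ) → DFormula Act τ
  | branchConj : (α : Act) → Formula Act τ → (I : Type) → (I → Conjunct Act τ) → DFormula Act τ

/-- Conjuncts `ψ`: positive `⟨ε⟩χ` or negative `¬⟨ε⟩χ`. -/
inductive Conjunct (Act : Type) (τ : Act) : Type 1
  | pos : DFormula Act τ → Conjunct Act τ
  | neg : DFormula Act τ → Conjunct Act τ
end

section Semantics

variable {Proc Act : Type}

mutual
/-- Semantics `⟦φ⟧`. -/
def Sat (Tr : Proc → Act → Proc → Prop) (τ : Act) (p : Proc) : Formula Act τ → Prop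
  | .delayed χ => ∃ p', Star Tr τ p p' ∧ SatD Tr τ p' χ
  | .conj _ ps => ∀ i, SatC Tr τ p (ps i)

/-- Semantics `⟦χ⟧^ε` of delayed formulas. -/
def SatD (Tr : Proc → Act → Proc → Prop) (τ : Act) (p : Proc) : DFormula Act τ → Prop
  | .obs a _ φ => ∃ p', Tr p a p' ∧ Sat Tr τ p' φ
  | .conj _ ps => ∀ i, SatC Tr τ p (ps i)
  | .stableConj _ ps => Stable Tr τ p ∧ ∀ i, SatC Tr τ p (ps i)
  | .branchConj α φ _ ps =>
      (∃ p', OptStep Tr τ p α p' ∧ Sat Tr τ p' φ) ∧ ∀ i, SatC Tr τ p (ps i)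

/-- Semantics `⟦ψ⟧^∧` of conjuncts. -/
def SatC (Tr : Proc → Act → Proc → Prop) (τ : Act) (p : Proc) : Conjunct Act τ → Prop
  | .pos χ => ∃ p', Star Tr τ p p' ∧ SatD Tr τ p' χ
  | .neg χ => ¬ ∃ p', Star Tr τ p p' ∧ SatD Tr τ p' χ
end

/-- `φ` distinguishes `p` from the set `Q`. -/
def Distinguishes (Tr : Proc → Act → Proc → Prop) (τ : Act) (φ : Formula Act τ)
    (p : Proc) (Q : Set Proc) : Prop :=
  Sat Tr τ p φ ∧ ∀ q ∈ Q, ¬ Sat Tr τ q φ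

/-- The delayed formula `χ` distinguishes `p` from the set `Q` w.r.t. `⟦·⟧^ε`. -/
def DistinguishesD (Tr : Proc → Act → Proc → Prop) (τ : Act) (χ : DFormula Act τ)
    (p : Proc) (Q : Set Proc) : Prop :=
  SatD Tr τ p χ ∧ ∀ q ∈ Q, ¬ SatD Tr τ q χ

/-- The conjunct `ψ` distinguishes `p` from `q` w.r.t. `⟦·⟧^∧`. -/
def DistinguishesC (Tr : Proc → Act → Proc → Prop) (τ : Act) (ψ : Conjunct Act τ)
    (p q : Proc) : Prop :=
  SatC Tr τ p ψ ∧ ¬ SatC Tr τ q ψ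

/-- Stability-respecting branching bisimulations: symmetric relations with the
branching-bisimulation transfer property and the stability-respecting
property. -/
def IsSRBBisim (Tr : Proc → Act → Proc → Prop) (τ : Act) (R : Proc → Proc → Prop) : Prop :=
  Symmetric R ∧
  (∀ p q, R p q → ∀ α p', Tr p α p' →
    (α = τ ∧ R p' q) ∨
      ∃ q' q'', Star Tr τ q q' ∧ Tr q' α q'' ∧ R p q' ∧ R p' q'') ∧
  (∀ p q, R p q → Stable Tr τ p →
    ∃ q', Star Tr τ q q' ∧ Stable Tr τ q' ∧ R p q')

end Semantics

/-! ### Expressiveness prices -/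

section Expr

variable {Act : Type} {τ : Act}

mutual
/-- Expressiveness price `expr` of formulas. -/
def exprF : Formula Act τ → Energy
  | .delayed χ => exprE χ
  | .conj I ps => ⨆ _ : Nonempty I, ((unitE 4 + unitE 2) + ⨆ i, exprC (ps i))

/-- Expressiveness price `expr^ε` of delayed formulas. -/
def exprE : DFormula Act τ → Energy
  | .obs _ _ φ => unitE 0 + exprF φ
  | .conj I ps => ⨆ _ : Nonempty I, (unitE 2 + ⨆ i, exprC (ps i))
  | .stableConj _ ps => unitE 3 + ⨆ i, exprC (ps i)
  | .branchConj _ φ _ ps =>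
      (unitE 1 + unitE 2) +
        (((unitE 0 + exprF φ) ⊔ onlyAt 5 (1 + exprF φ 0)) ⊔ ⨆ i, exprC (ps i))

/-- Expressiveness price `expr^∧` of conjuncts. -/
def exprC : Conjunct Act τ → Energy
  | .pos χ => exprE χ ⊔ onlyAt 5 (exprE χ 0)
  | .neg χ => (unitE 7 + exprE χ) ⊔ onlyAt 6 (exprE χ 0)
end

end Expr

/-! ### The weak spectroscopy energy game -/

/-- Positions of the weak spectroscopy game. -/
inductive GPos (Proc Act : Type) : Type
  | att (p : Proc) (Q : Set Proc)                                 -- `[p,Q]_a`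
  | attD (p : Proc) (Q : Set Proc)                                -- `[p,Q]^ε_a`
  | attC (p q : Proc)                                             -- `[p,q]^∧_a`
  | attB (p : Proc) (Q : Set Proc)                                -- `[p,Q]^η_a`
  | defC (p : Proc) (Q : Set Proc)                                -- `(p,Q)_d`
  | defS (p : Proc) (Q : Set Proc)                                -- `(p,Q)^s_d`
  | defB (p : Proc) (α : Act) (p' : Proc) (Q Qa : Set Proc)       -- `(p,α,p',Q,Qa)^η_d`

/-- The zero update. -/
def zeroU : Update := fun _ => UpdComp.zero

/-- The update `-ê_i`. -/
def decU (i : Fin 8) : Update := fun k => if k = i then UpdComp.decr else UpdComp.zero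

/-- The update `(min_{1,6},0,0,0,0,0,0,0)`. -/
def minU16 : Update := fun k => if k = 0 then UpdComp.minWith {5} else UpdComp.zero

/-- The update `(min_{1,7},0,0,0,0,0,0,-1)`. -/
def minU17dec8 : Update := fun k =>
  if k = 0 then UpdComp.minWith {6} else if k = 7 then UpdComp.decr else UpdComp.zero

/-- The update `(0,-1,-1,0,0,0,0,0)`. -/
def dec23 : Update := fun k => if k = 1 ∨ k = 2 then UpdComp.decr else UpdComp.zero

/-- The update `(min_{1,6},-1,-1,0,0,0,0,0)`. -/
def minU16dec23 : Update := fun k =>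
  if k = 0 then UpdComp.minWith {5}
  else if k = 1 ∨ k = 2 then UpdComp.decr else UpdComp.zero

section Game

variable {Proc Act : Type}

/-- Moves of the weak spectroscopy game. -/
inductive GMove (Tr : Proc → Act → Proc → Prop) (τ : Act) :
    GPos Proc Act → Update → GPos Proc Act → Prop
  | delay {p : Proc} {Q Q' : Set Proc} :
      SetStar Tr τ Q Q' →
      GMove Tr τ (.att p Q) zeroU (.attD p Q')
  | procrastination {p p' : Proc} {Q : Set Proc} :
      Tr p τ p' → p ≠ p' →
      GMove Tr τ (.attD p Q) zeroU (.attD p' Q)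
  | observation {p p' : Proc} {a : Act} {Q Q' : Set Proc} :
      Tr p a p' → a ≠ τ → SetStep Tr Q a Q' →
      GMove Tr τ (.attD p Q) (decU 0) (.att p' Q')
  | finishing {p : Proc} :
      GMove Tr τ (.att p ∅) zeroU (.defC p ∅)
  | immediateConj {p : Proc} {Q : Set Proc} :
      Q ≠ ∅ →
      GMove Tr τ (.att p Q) (decU 4) (.defC p Q)
  | lateConj {p : Proc} {Q : Set Proc} :
      GMove Tr τ (.attD p Q) zeroU (.defC p Q)
  | conjAnswer {p q : Proc} {Q : Set Proc} :
      q ∈ Q →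
      GMove Tr τ (.defC p Q) (decU 2) (.attC p q)
  | posConjunct {p q : Proc} {Q : Set Proc} :
      SetStar Tr τ {q} Q →
      GMove Tr τ (.attC p q) minU16 (.attD p Q)
  | negConjunct {p q : Proc} {Q : Set Proc} :
      SetStar Tr τ {p} Q → p ≠ q →
      GMove Tr τ (.attC p q) minU17dec8 (.attD q Q)
  | stableConj {p : Proc} {Q : Set Proc} :
      Stable Tr τ p →
      GMove Tr τ (.attD p Q) zeroU (.defS p {q ∈ Q | Stable Tr τ q})
  | conjStableAnswer {p q : Proc} {Q : Set Proc} :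
      q ∈ Q →
      GMove Tr τ (.defS p Q) (decU 3) (.attC p q)
  | stableFinishing {p : Proc} :
      GMove Tr τ (.defS p ∅) (decU 3) (.defC p ∅)
  | branchConj {p p' : Proc} {α : Act} {Q Qa : Set Proc} :
      OptStep Tr τ p α p' → Qa ⊆ Q →
      GMove Tr τ (.attD p Q) zeroU (.defB p α p' (Q \ Qa) Qa)
  | branchAnswer {p p' q : Proc} {α : Act} {Q Qa : Set Proc} :
      q ∈ Q →
      GMove Tr τ (.defB p α p' Q Qa) dec23 (.attC p q)
  | branchObservation {p p' : Proc} {α : Act} {Q Qa Q' : Set Proc} :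
      SetOpt Tr τ Qa α Q' →
      GMove Tr τ (.defB p α p' Q Qa) minU16dec23 (.attB p' Q')
  | branchAccounting {p : Proc} {Q : Set Proc} :
      GMove Tr τ (.attB p Q) (decU 0) (.att p Q)

/-- Defender positions of the weak spectroscopy game. -/
def isDefender : GPos Proc Act → Prop
  | .defC _ _ => True
  | .defS _ _ => True
  | .defB _ _ _ _ _ => True
  | _ => False

/-- The weak spectroscopy energy game `G△`. -/
def specGame (Tr : Proc → Act → Proc → Prop) (τ : Act) : EGame (GPos Proc Act) where
  defender := isDefender
  move := GMove Tr τ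

end Game

/-! ### Strategy formulas -/

section Strat

variable {Proc Act : Type}

mutual
/-- Attacker strategy formulas (formula sort). -/
inductive StratF (Tr : Proc → Act → Proc → Prop) (τ : Act) :
    GPos Proc Act → Energy → Formula Act τ → Prop
  | delay {p : Proc} {Q Q' : Set Proc} {u : Update} {e e' : Energy} {χ : DFormula Act τ} :
      GMove Tr τ (.att p Q) u (.attD p Q') →
      upd e u = some e' →
      (specGame Tr τ).Win (.attD p Q') e' →
      StratD Tr τ (.attD p Q') e' χ →
      StratF Tr τ (.att p Q) e (.delayed χ)
  | immediateConj {p : Proc} {Q : Set Proc} {u : Update} {e e' : Energy}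
      {I : Type} {ps : I → Conjunct Act τ} :
      GMove Tr τ (.att p Q) u (.defC p Q) →
      upd e u = some e' →
      (specGame Tr τ).Win (.defC p Q) e' →
      StratD Tr τ (.defC p Q) e' (.conj I ps) →
      StratF Tr τ (.att p Q) e (.conj I ps)

/-- Attacker strategy formulas (delayed-formula sort). -/
inductive StratD (Tr : Proc → Act → Proc → Prop) (τ : Act) :
    GPos Proc Act → Energy → DFormula Act τ → Prop
  | procrastination {p p' : Proc} {Q : Set Proc} {u : Update} {e e' : Energy}
      {χ : DFormula Act τ} :
      GMove Tr τ (.attD p Q) u (.attD p' Q) →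
      upd e u = some e' →
      (specGame Tr τ).Win (.attD p' Q) e' →
      StratD Tr τ (.attD p' Q) e' χ →
      StratD Tr τ (.attD p Q) e χ
  | observation {p p' : Proc} {a : Act} {Q Q' : Set Proc} {u : Update} {e e' : Energy}
      {φ : Formula Act τ} (ha : a ≠ τ) :
      GMove Tr τ (.attD p Q) u (.att p' Q') →
      Tr p a p' → SetStep Tr Q a Q' →
      upd e u = some e' →
      (specGame Tr τ).Win (.att p' Q') e' →
      StratF Tr τ (.att p' Q') e' φ →
      StratD Tr τ (.attD p Q) e (.obs a ha φ)
  | lateConj {p : Proc} {Q : Set Proc} {u : Update} {e e' : Energy} {χ : DFormula Act τ} :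
      GMove Tr τ (.attD p Q) u (.defC p Q) →
      upd e u = some e' →
      (specGame Tr τ).Win (.defC p Q) e' →
      StratD Tr τ (.defC p Q) e' χ →
      StratD Tr τ (.attD p Q) e χ
  | stable {p : Proc} {Q Q' : Set Proc} {u : Update} {e e' : Energy} {χ : DFormula Act τ} :
      GMove Tr τ (.attD p Q) u (.defS p Q') →
      upd e u = some e' →
      (specGame Tr τ).Win (.defS p Q') e' →
      StratD Tr τ (.defS p Q') e' χ →
      StratD Tr τ (.attD p Q) e χ
  | branch {p p' : Proc} {α : Act} {Q Q' Qa : Set Proc} {u : Update} {e e' : Energy}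
      {χ : DFormula Act τ} :
      GMove Tr τ (.attD p Q) u (.defB p α p' Q' Qa) →
      upd e u = some e' →
      (specGame Tr τ).Win (.defB p α p' Q' Qa) e' →
      StratD Tr τ (.defB p α p' Q' Qa) e' χ →
      StratD Tr τ (.attD p Q) e χ
  | conj {p : Proc} {Q : Set Proc} {e : Energy}
      (us : {q // q ∈ Q} → Update) (es : {q // q ∈ Q} → Energy)
      (ψs : {q // q ∈ Q} → Conjunct Act τ) :
      (∀ qq : {q // q ∈ Q}, GMove Tr τ (.defC p Q) (us qq) (.attC p qq.1)) →
      (∀ qq : {q // q ∈ Q}, upd e (us qq) = some (es qq)) →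
      (∀ qq : {q // q ∈ Q}, (specGame Tr τ).Win (.attC p qq.1) (es qq)) →
      (∀ qq : {q // q ∈ Q}, StratC Tr τ (.attC p qq.1) (es qq) (ψs qq)) →
      StratD Tr τ (.defC p Q) e (.conj {q // q ∈ Q} ψs)
  | stableConj {p : Proc} {Q : Set Proc} {e : Energy}
      (hne : Q.Nonempty)
      (us : {q // q ∈ Q} → Update) (es : {q // q ∈ Q} → Energy)
      (ψs : {q // q ∈ Q} → Conjunct Act τ) :
      (∀ qq : {q // q ∈ Q}, GMove Tr τ (.defS p Q) (us qq) (.attC p qq.1)) →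
      (∀ qq : {q // q ∈ Q}, upd e (us qq) = some (es qq)) →
      (∀ qq : {q // q ∈ Q}, (specGame Tr τ).Win (.attC p qq.1) (es qq)) →
      (∀ qq : {q // q ∈ Q}, StratC Tr τ (.attC p qq.1) (es qq) (ψs qq)) →
      StratD Tr τ (.defS p Q) e (.stableConj {q // q ∈ Q} ψs)
  | stableFinish {p : Proc} {u : Update} {e e' : Energy} :
      GMove Tr τ (.defS p ∅) u (.defC p ∅) →
      upd e u = some e' →
      (specGame Tr τ).Win (.defC p (∅ : Set Proc)) e' →
      StratD Tr τ (.defS p ∅) e (.stableConj Empty fun x => x.elim)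
  | branchConj {p p' : Proc} {α : Act} {Q Qa Q' : Set Proc} {ua ua' : Update}
      {e e1 ea : Energy} {φa : Formula Act τ}
      (us : {q // q ∈ Q} → Update) (es : {q // q ∈ Q} → Energy)
      (ψs : {q // q ∈ Q} → Conjunct Act τ) :
      GMove Tr τ (.defB p α p' Q Qa) ua (.attB p' Q') →
      GMove Tr τ (.attB p' Q') ua' (.att p' Q') →
      upd e ua = some e1 →
      upd e1 ua' = some ea →
      (specGame Tr τ).Win (.att p' Q') ea →
      StratF Tr τ (.att p' Q') ea φa →
      (∀ qq : {q // q ∈ Q}, GMove Tr τ (.defB p α p' Q Qa) (us qq) (.attC p qq.1)) →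
      (∀ qq : {q // q ∈ Q}, upd e (us qq) = some (es qq)) →
      (∀ qq : {q // q ∈ Q}, (specGame Tr τ).Win (.attC p qq.1) (es qq)) →
      (∀ qq : {q // q ∈ Q}, StratC Tr τ (.attC p qq.1) (es qq) (ψs qq)) →
      StratD Tr τ (.defB p α p' Q Qa) e (.branchConj α φa {q // q ∈ Q} ψs)

/-- Attacker strategy formulas (conjunct sort). -/
inductive StratC (Tr : Proc → Act → Proc → Prop) (τ : Act) :
    GPos Proc Act → Energy → Conjunct Act τ → Prop
  | pos {p q : Proc} {Q' : Set Proc} {u : Update} {e e' : Energy} {χ : DFormula Act τ} :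
      GMove Tr τ (.attC p q) u (.attD p Q') →
      upd e u = some e' →
      (specGame Tr τ).Win (.attD p Q') e' →
      StratD Tr τ (.attD p Q') e' χ →
      StratC Tr τ (.attC p q) e (.pos χ)
  | neg {p q : Proc} {P' : Set Proc} {u : Update} {e e' : Energy} {χ : DFormula Act τ} :
      GMove Tr τ (.attC p q) u (.attD q P') →
      upd e u = some e' →
      (specGame Tr τ).Win (.attD q P') e' →
      StratD Tr τ (.attD q P') e' χ →
      StratC Tr τ (.attC p q) e (.neg χ)
end

end Strat

/-! ### Auxiliary lemmas for the main theorem -/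

section Aux

lemma upd_char {e e' : Energy} {u : Update} (h : upd e u = some e') :
    (∀ k, u k = UpdComp.decr → e k ≠ 0) ∧
      ∀ k, e' k = match u k with
        | UpdComp.decr => e k - 1
        | UpdComp.zero => e k
        | UpdComp.minWith D => (insert k D).inf e := by
  unfold upd at h
  split at h
  · next hcond =>
      refine ⟨hcond, fun k => ?_⟩
      injection h with h
      exact (congrFun h k).symm
  · cases h

lemma upd_zeroU_eq {e e' : Energy} (h : upd e zeroU = some e') : e' = e := by
  funext k
  have := (upd_char h).2 k
  simpa [zeroU] using this

lemma upd_decU {e e' : Energy} {i : Fin 8} (h : upd e (decU i) = some e') :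
    e i ≠ 0 ∧ ∀ k, e' k = if k = i then e k - 1 else e k := by
  obtain ⟨hc, hk⟩ := upd_char h
  refine ⟨hc i (by simp [decU]), fun k => ?_⟩
  by_cases hki : k = i
  · subst hki; simpa [decU] using hk k
  · simpa [decU, hki] using hk k

lemma upd_minU16 {e e' : Energy} (h : upd e minU16 = some e') :
    ∀ k, e' k = if k = 0 then e 0 ⊓ e 5 else e k := by
  obtain ⟨_, hk⟩ := upd_char h
  intro k
  by_cases hk0 : k = 0
  · subst hk0; simpa [minU16] using hk 0
  · simpa [minU16, hk0] using hk k

lemma upd_minU17dec8 {e e' : Energy} (h : upd e minU17dec8 = some e') :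
    e 7 ≠ 0 ∧ ∀ k, e' k = if k = 0 then e 0 ⊓ e 6 else if k = 7 then e k - 1 else e k := by
  obtain ⟨hc, hk⟩ := upd_char h
  refine ⟨hc 7 (by simp [minU17dec8]), fun k => ?_⟩
  by_cases hk0 : k = 0
  · subst hk0; simpa [minU17dec8] using hk 0
  · by_cases hk7 : k = 7
    · subst hk7; simpa [minU17dec8] using hk 7
    · simpa [minU17dec8, hk0, hk7] using hk k

lemma upd_dec23 {e e' : Energy} (h : upd e dec23 = some e') :
    (e 1 ≠ 0 ∧ e 2 ≠ 0) ∧ ∀ k, e' k = if k = 1 ∨ k = 2 then e k - 1 else e k := by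
  obtain ⟨hc, hk⟩ := upd_char h
  refine ⟨⟨hc 1 (by simp [dec23]), hc 2 (by simp [dec23])⟩, fun k => ?_⟩
  by_cases hk12 : k = 1 ∨ k = 2
  · rcases hk12 with rfl | rfl
    · simpa [dec23] using hk 1
    · simpa [dec23] using hk 2
  · simp only [not_or] at hk12
    simpa [dec23, hk12.1, hk12.2] using hk k

lemma upd_minU16dec23 {e e' : Energy} (h : upd e minU16dec23 = some e') :
    (e 1 ≠ 0 ∧ e 2 ≠ 0) ∧
      ∀ k, e' k = if k = 0 then e 0 ⊓ e 5
        else if k = 1 ∨ k = 2 then e k - 1 else e k := by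
  obtain ⟨hc, hk⟩ := upd_char h
  refine ⟨⟨hc 1 (by simp [minU16dec23]), hc 2 (by simp [minU16dec23])⟩, fun k => ?_⟩
  by_cases hk0 : k = 0
  · subst hk0; simpa [minU16dec23] using hk 0
  · by_cases hk12 : k = 1 ∨ k = 2
    · rcases hk12 with rfl | rfl
      · simpa [minU16dec23] using hk 1
      · simpa [minU16dec23] using hk 2
    · simp only [not_or] at hk12
      simpa [minU16dec23, hk0, hk12.1, hk12.2] using hk k

lemma one_add_le_of_le_sub_one {x a : ℕ∞} (ha : a ≠ 0) (hx : x ≤ a - 1) : 1 + x ≤ a := by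
  have h1 : (1 : ℕ∞) ≤ a := ENat.one_le_iff_ne_zero.mpr ha
  calc 1 + x ≤ 1 + (a - 1) := by exact add_le_add le_rfl hx
    _ = a - 1 + 1 := add_comm _ _
    _ = a := tsub_add_cancel_of_le h1

lemma unitE_le {e : Energy} {i : Fin 8} (h : e i ≠ 0) : unitE i ≤ e := by
  rw [Pi.le_def]
  intro k
  by_cases hk : k = i
  · subst hk
    simpa [unitE] using ENat.one_le_iff_ne_zero.mpr h
  · simp [unitE, hk]

lemma unit_add_price {e e' x : Energy} {i : Fin 8} (h : upd e (decU i) = some e')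
    (hx : x ≤ e') : unitE i + x ≤ e := by
  obtain ⟨h0, hk⟩ := upd_decU h
  rw [Pi.le_def]
  intro k
  have hxk : x k ≤ e' k := Pi.le_def.mp hx k
  by_cases hki : k = i
  · subst hki
    rw [hk k] at hxk
    simp only [if_pos rfl] at hxk
    simpa [Pi.add_apply, unitE] using one_add_le_of_le_sub_one h0 hxk
  · rw [hk k, if_neg hki] at hxk
    simpa [Pi.add_apply, unitE, hki] using hxk

lemma le_of_upd_decU {e e' : Energy} {i : Fin 8} (h : upd e (decU i) = some e') : e' ≤ e := by
  obtain ⟨h0, hk⟩ := upd_decU h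
  rw [Pi.le_def]
  intro k
  rw [hk k]
  by_cases hki : k = i <;> simp [hki, tsub_le_self]

lemma pos_price {e e' x : Energy} (hle : e' ≤ e) (h05 : e' 0 ≤ e 5) (hx : x ≤ e') :
    x ⊔ onlyAt 5 (x 0) ≤ e := by
  refine sup_le (hx.trans hle) ?_
  rw [Pi.le_def]
  intro k
  by_cases hk : k = 5
  · subst hk
    simp only [onlyAt, if_pos rfl]
    exact (Pi.le_def.mp hx 0).trans h05
  · simp [onlyAt, hk]

lemma neg_price {e e' x : Energy} (hle : unitE 7 + e' ≤ e) (h06 : e' 0 ≤ e 6) (hx : x ≤ e') :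
    (unitE 7 + x) ⊔ onlyAt 6 (x 0) ≤ e := by
  refine sup_le ((add_le_add le_rfl hx).trans hle) ?_
  rw [Pi.le_def]
  intro k
  by_cases hk : k = 6
  · subst hk
    simp only [onlyAt, if_pos rfl]
    exact (Pi.le_def.mp hx 0).trans h06
  · simp [onlyAt, hk]

lemma branch_price {e a c : Energy}
    (h1 : e 1 ≠ 0) (h2 : e 2 ≠ 0) (h05 : e 0 ⊓ e 5 ≠ 0)
    (ha0 : a 0 ≤ e 0 ⊓ e 5 - 1) (ha1 : a 1 ≤ e 1 - 1) (ha2 : a 2 ≤ e 2 - 1)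
    (ha : ∀ k : Fin 8, k ≠ 0 → k ≠ 1 → k ≠ 2 → a k ≤ e k)
    (hc1 : c 1 ≤ e 1 - 1) (hc2 : c 2 ≤ e 2 - 1)
    (hc : ∀ k : Fin 8, k ≠ 1 → k ≠ 2 → c k ≤ e k) :
    (unitE 1 + unitE 2) + (((unitE 0 + a) ⊔ onlyAt 5 (1 + a 0)) ⊔ c) ≤ e := by
  have h1a0 : 1 + a 0 ≤ e 0 ⊓ e 5 := one_add_le_of_le_sub_one h05 ha0
  have h1a0 : 1 + a 0 ≤ e 0 ⊓ e 5 := one_add_le_of_le_sub_one h05 ha0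
  rw [Pi.le_def]
  intro k
  fin_cases k <;>
    simp +decide only [Pi.add_apply, Pi.sup_apply, unitE, onlyAt, if_true, if_false,
      zero_add, add_zero]
  · exact sup_le (sup_le (h1a0.trans inf_le_left) zero_le) (hc 0 (by decide) (by decide))
  · exact one_add_le_of_le_sub_one h1 (sup_le (sup_le ha1 zero_le) hc1)
  · exact one_add_le_of_le_sub_one h2 (sup_le (sup_le ha2 zero_le) hc2)
  · exact sup_le (sup_le (ha 3 (by decide) (by decide) (by decide)) zero_le)
      (hc 3 (by decide) (by decide))
  · exact sup_le (sup_le (ha 4 (by decide) (by decide) (by decide)) zero_le)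
      (hc 4 (by decide) (by decide))
  · exact sup_le (sup_le (ha 5 (by decide) (by decide) (by decide))
      (h1a0.trans inf_le_right)) (hc 5 (by decide) (by decide))
  · exact sup_le (sup_le (ha 6 (by decide) (by decide) (by decide)) zero_le)
      (hc 6 (by decide) (by decide))
  · exact sup_le (sup_le (ha 7 (by decide) (by decide) (by decide)) zero_le)
      (hc 7 (by decide) (by decide))

end Aux

/-! ### The main induction -/

section MainInd

variable {Proc Act : Type}

/-- The motive of the main induction over attacker winning budgets. -/
def Motive (Tr : Proc → Act → Proc → Prop) (τ : Act) : GPos Proc Act → Energy → Prop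
  | .att p Q, e => ∃ φ, StratF Tr τ (.att p Q) e φ ∧ exprF φ ≤ e
  | .attD p Q, e => ∃ χ, StratD Tr τ (.attD p Q) e χ ∧ exprE χ ≤ e
  | .attC p q, e => ∃ ψ, StratC Tr τ (.attC p q) e ψ ∧ exprC ψ ≤ e
  | .attB p Q, e => ∃ e' φ, upd e (decU 0) = some e' ∧
      (specGame Tr τ).Win (.att p Q) e' ∧ StratF Tr τ (.att p Q) e' φ ∧ exprF φ ≤ e'
  | .defC p Q, e => ∃ ps : {q // q ∈ Q} → Conjunct Act τ,
      StratD Tr τ (.defC p Q) e (.conj _ ps) ∧ exprE (DFormula.conj _ ps) ≤ e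
  | .defS p Q, e => ∃ χ, StratD Tr τ (.defS p Q) e χ ∧ exprE χ ≤ e
  | .defB p α p' Q Qa, e => ∃ χ, StratD Tr τ (.defB p α p' Q Qa) e χ ∧ exprE χ ≤ e

theorem motive_of_win (Tr : Proc → Act → Proc → Prop) (τ : Act) :
    ∀ g e, (specGame Tr τ).Win g e → Motive Tr τ g e := by
  intro g e h
  induction h with
  | @attack g u g' e e' hnd hm hu hw ih =>
    cases hm with
    | @delay p Q Q' hQ =>
      obtain ⟨χ, hs, he⟩ := ih
      have heq := upd_zeroU_eq hu
      subst heq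
      exact ⟨.delayed χ, StratF.delay (GMove.delay hQ) hu hw hs, by simpa [exprF] using he⟩
    | @procrastination p p' Q hp hne =>
      obtain ⟨χ, hs, he⟩ := ih
      have heq := upd_zeroU_eq hu
      subst heq
      exact ⟨χ, StratD.procrastination (GMove.procrastination hp hne) hu hw hs, he⟩
    | @observation p p' a Q Q' hp ha hQ =>
      obtain ⟨φ, hs, he⟩ := ih
      refine ⟨.obs a ha φ,
        StratD.observation ha (GMove.observation hp ha hQ) hp hQ hu hw hs, ?_⟩
      simp only [exprE]
      exact unit_add_price hu he
    | @finishing p =>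
      obtain ⟨ps, hs, he⟩ := ih
      have heq := upd_zeroU_eq hu
      subst heq
      refine ⟨.conj _ ps, StratF.immediateConj GMove.finishing hu hw hs, ?_⟩
      simp only [exprF]
      exact iSup_le fun hne => (hne.elim fun qq => absurd qq.2 (Set.notMem_empty _))
    | @immediateConj p Q hQ =>
      obtain ⟨ps, hs, he⟩ := ih
      refine ⟨.conj _ ps, StratF.immediateConj (GMove.immediateConj hQ) hu hw hs, ?_⟩
      simp only [exprF]
      refine iSup_le fun hne => ?_
      have h2 : unitE 2 + ⨆ i, exprC (ps i) ≤ e' := by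
        refine le_trans ?_ he
        simp only [exprE]
        exact le_iSup (fun _ : Nonempty _ => unitE 2 + ⨆ i, exprC (ps i)) hne
      calc unitE 4 + unitE 2 + ⨆ i, exprC (ps i)
          = unitE 4 + (unitE 2 + ⨆ i, exprC (ps i)) := by rw [add_assoc]
        _ ≤ unitE 4 + e' := add_le_add le_rfl h2
        _ ≤ e := unit_add_price hu le_rfl
    | @lateConj p Q =>
      obtain ⟨ps, hs, he⟩ := ih
      have heq := upd_zeroU_eq hu
      subst heq
      exact ⟨.conj _ ps, StratD.lateConj GMove.lateConj hu hw hs, he⟩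
    | @posConjunct p q Q hQ =>
      obtain ⟨χ, hs, he⟩ := ih
      refine ⟨.pos χ, StratC.pos (GMove.posConjunct hQ) hu hw hs, ?_⟩
      simp only [exprC]
      have hk := upd_minU16 hu
      refine pos_price ?_ ?_ he
      · rw [Pi.le_def]
        intro k
        rw [hk k]
        by_cases hk0 : k = 0 <;> simp [hk0, inf_le_left]
      · rw [hk 0]
        simp
    | @negConjunct p q Q hQ hpq =>
      obtain ⟨χ, hs, he⟩ := ih
      refine ⟨.neg χ, StratC.neg (GMove.negConjunct hQ hpq) hu hw hs, ?_⟩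
      simp only [exprC]
      obtain ⟨h7, hk⟩ := upd_minU17dec8 hu
      refine neg_price ?_ ?_ he
      · rw [Pi.le_def]
        intro k
        rw [Pi.add_apply, hk k]
        by_cases hk0 : k = 0
        · subst hk0; simp [unitE, inf_le_left]
        · by_cases hk7 : k = 7
          · subst hk7
            simp only [unitE, if_neg hk0, if_pos rfl]
            norm_num
            exact one_add_le_of_le_sub_one h7 le_rfl
          · simp [unitE, hk0, hk7]
      · rw [hk 0]
        simp
    | @stableConj p Q hstable =>
      obtain ⟨χ, hs, he⟩ := ih
      have heq := upd_zeroU_eq hu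
      subst heq
      exact ⟨χ, StratD.stable (GMove.stableConj hstable) hu hw hs, he⟩
    | @branchConj p p' α Q Qa hopt hsub =>
      obtain ⟨χ, hs, he⟩ := ih
      have heq := upd_zeroU_eq hu
      subst heq
      exact ⟨χ, StratD.branch (GMove.branchConj hopt hsub) hu hw hs, he⟩
    | @branchAccounting p Q =>
      obtain ⟨φ, hs, he⟩ := ih
      exact ⟨e', φ, hu, hw, hs, he⟩
    | conjAnswer _ => exact absurd trivial hnd
    | conjStableAnswer _ => exact absurd trivial hnd
    | stableFinishing => exact absurd trivial hnd
    | branchAnswer _ => exact absurd trivial hnd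
    | branchObservation _ => exact absurd trivial hnd
  | @defend g e hd h2 h3 ih =>
    cases g with
    | att p Q => exact absurd hd (fun h => h)
    | attD p Q => exact absurd hd (fun h => h)
    | attC p q => exact absurd hd (fun h => h)
    | attB p Q => exact absurd hd (fun h => h)
    | defC p Q =>
      rcases Set.eq_empty_or_nonempty Q with rfl | ⟨q0, hq0⟩
      · refine ⟨fun qq => absurd qq.2 (Set.notMem_empty _),
          StratD.conj (fun _ => zeroU) (fun _ => e)
            (fun qq => absurd qq.2 (Set.notMem_empty _))
            (fun qq => absurd qq.2 (Set.notMem_empty _))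
            (fun qq => absurd qq.2 (Set.notMem_empty _))
            (fun qq => absurd qq.2 (Set.notMem_empty _))
            (fun qq => absurd qq.2 (Set.notMem_empty _)), ?_⟩
        simp only [exprE]
        exact iSup_le fun hne => (hne.elim fun qq => absurd qq.2 (Set.notMem_empty _))
      · have hmv : ∀ qq : {q // q ∈ Q},
            GMove Tr τ (.defC p Q) (decU 2) (GPos.attC p qq.1) :=
          fun qq => GMove.conjAnswer qq.2
        obtain ⟨e', he'⟩ : ∃ e', upd e (decU 2) = some e' :=
          Option.ne_none_iff_exists'.mp (h2 (decU 2) (.attC p q0) (GMove.conjAnswer hq0))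
        have hwin : ∀ qq : {q // q ∈ Q}, (specGame Tr τ).Win (.attC p qq.1) e' :=
          fun qq => h3 _ _ _ (hmv qq) he'
        have hmq : ∀ qq : {q // q ∈ Q},
            ∃ ψ, StratC Tr τ (.attC p qq.1) e' ψ ∧ exprC ψ ≤ e' :=
          fun qq => ih _ _ _ (hmv qq) he'
        choose ψs hsq hxq using hmq
        refine ⟨ψs, StratD.conj (fun _ => decU 2) (fun _ => e') ψs hmv (fun _ => he')
          hwin hsq, ?_⟩
        simp only [exprE]
        refine iSup_le fun _ => ?_
        calc unitE 2 + ⨆ qq, exprC (ψs qq) ≤ unitE 2 + e' :=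
              add_le_add le_rfl (iSup_le hxq)
          _ ≤ e := unit_add_price he' le_rfl
    | defS p Q =>
      rcases Set.eq_empty_or_nonempty Q with rfl | ⟨q0, hq0⟩
      · obtain ⟨e', he'⟩ : ∃ e', upd e (decU 3) = some e' :=
          Option.ne_none_iff_exists'.mp (h2 (decU 3) (.defC p ∅) GMove.stableFinishing)
        have hwin := h3 _ _ _ GMove.stableFinishing he'
        refine ⟨.stableConj Empty fun x => x.elim,
          StratD.stableFinish GMove.stableFinishing he' hwin, ?_⟩
        simp only [exprE]
        rw [iSup_of_empty]
        have h3ne : e 3 ≠ 0 := (upd_decU he').1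
        calc unitE 3 + (⊥ : Energy) = unitE 3 := by
              rw [Pi.bot_def]
              funext k
              simp
          _ ≤ e := unitE_le h3ne
      · have hmv : ∀ qq : {q // q ∈ Q},
            GMove Tr τ (.defS p Q) (decU 3) (GPos.attC p qq.1) :=
          fun qq => GMove.conjStableAnswer qq.2
        obtain ⟨e', he'⟩ : ∃ e', upd e (decU 3) = some e' :=
          Option.ne_none_iff_exists'.mp (h2 (decU 3) (.attC p q0) (GMove.conjStableAnswer hq0))
        have hwin : ∀ qq : {q // q ∈ Q}, (specGame Tr τ).Win (.attC p qq.1) e' :=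
          fun qq => h3 _ _ _ (hmv qq) he'
        have hmq : ∀ qq : {q // q ∈ Q},
            ∃ ψ, StratC Tr τ (.attC p qq.1) e' ψ ∧ exprC ψ ≤ e' :=
          fun qq => ih _ _ _ (hmv qq) he'
        choose ψs hsq hxq using hmq
        refine ⟨.stableConj _ ψs,
          StratD.stableConj ⟨q0, hq0⟩ (fun _ => decU 3) (fun _ => e') ψs hmv (fun _ => he')
            hwin hsq, ?_⟩
        simp only [exprE]
        calc unitE 3 + ⨆ qq, exprC (ψs qq) ≤ unitE 3 + e' :=
              add_le_add le_rfl (iSup_le hxq)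
          _ ≤ e := unit_add_price he' le_rfl
    | defB p α p' Q Qa =>
      have hobs : GMove Tr τ (.defB p α p' Q Qa) minU16dec23
          (.attB p' {q' | ∃ q ∈ Qa, OptStep Tr τ q α q'}) :=
        GMove.branchObservation rfl
      obtain ⟨e1, he1⟩ : ∃ e1, upd e minU16dec23 = some e1 :=
        Option.ne_none_iff_exists'.mp (h2 _ _ hobs)
      have hB : Motive Tr τ (.attB p' {q' | ∃ q ∈ Qa, OptStep Tr τ q α q'}) e1 :=
        ih _ _ _ hobs he1
      obtain ⟨ea, φa, hea, hwa, hsa, hxa⟩ := hB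
      have hmv : ∀ qq : {q // q ∈ Q},
          GMove Tr τ (.defB p α p' Q Qa) dec23 (GPos.attC p qq.1) :=
        fun qq => GMove.branchAnswer qq.2
      have hup : ∀ qq : {q // q ∈ Q}, ∃ eq', upd e dec23 = some eq' :=
        fun qq => Option.ne_none_iff_exists'.mp (h2 _ _ (hmv qq))
      choose es hes using hup
      have hwq : ∀ qq : {q // q ∈ Q}, (specGame Tr τ).Win (.attC p qq.1) (es qq) :=
        fun qq => h3 _ _ _ (hmv qq) (hes qq)
      have hmq : ∀ qq : {q // q ∈ Q},
          ∃ ψ, StratC Tr τ (.attC p qq.1) (es qq) ψ ∧ exprC ψ ≤ es qq :=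
        fun qq => ih _ _ _ (hmv qq) (hes qq)
      choose ψs hsq hxq using hmq
      refine ⟨.branchConj α φa _ ψs,
        StratD.branchConj (fun _ => dec23) es ψs hobs GMove.branchAccounting he1 hea
          hwa hsa hmv hes hwq hsq, ?_⟩
      simp only [exprE]
      -- component facts
      obtain ⟨⟨h1ne, h2ne⟩, hk1⟩ := upd_minU16dec23 he1
      obtain ⟨h05ne', hka⟩ := upd_decU hea
      have h05ne : e 0 ⊓ e 5 ≠ 0 := by rwa [hk1 0, if_pos rfl] at h05ne'
      have hak : ∀ k, exprF φa k ≤ ea k := fun k => Pi.le_def.mp hxa k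
      have hck : ∀ k : Fin 8,
          (⨆ qq, exprC (ψs qq)) k ≤ if k = 1 ∨ k = 2 then e k - 1 else e k := by
        intro k
        rw [iSup_apply]
        refine iSup_le fun qq => ?_
        have := Pi.le_def.mp (hxq qq) k
        rwa [(upd_dec23 (hes qq)).2 k] at this
      refine branch_price h1ne h2ne h05ne ?_ ?_ ?_ ?_ ?_ ?_ ?_
      · have := hak 0
        rw [hka 0, if_pos rfl, hk1 0, if_pos rfl] at this
        exact this
      · have := hak 1
        rw [hka 1, if_neg (by decide), hk1 1, if_neg (by decide),
          if_pos (Or.inl rfl)] at this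
        exact this
      · have := hak 2
        rw [hka 2, if_neg (by decide), hk1 2, if_neg (by decide),
          if_pos (Or.inr rfl)] at this
        exact this
      · intro k hk0 hk1' hk2
        have := hak k
        rwa [hka k, if_neg hk0, hk1 k, if_neg hk0,
          if_neg (not_or.mpr ⟨hk1', hk2⟩)] at this
      · have := hck 1
        rwa [if_pos (Or.inl rfl)] at this
      · have := hck 2
        rwa [if_pos (Or.inr rfl)] at this
      · intro k hk1' hk2
        have := hck k
        rwa [if_neg (not_or.mpr ⟨hk1', hk2⟩)] at this

end MainInd


/-- winning budgets at `(p,Q)_d` yield strategy conjunctions of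
price at most `e`. -/
theorem win_implies_strategy_formula_conjunction {Proc Act : Type}
    (Tr : Proc → Act → Proc → Prop) (τ : Act) (p : Proc) (Q : Set Proc) (e : Energy)
    (h : (specGame Tr τ).Win (.defC p Q) e) :
    ∃ (I : Type) (ps : I → Conjunct Act τ),
      StratD Tr τ (.defC p Q) e (DFormula.conj I ps) ∧
        exprE (DFormula.conj I ps) ≤ e := by
  obtain ⟨ps, hs, he⟩ := motive_of_win Tr τ (.defC p Q) e h
  exact ⟨_, ps, hs, he⟩

end Spectroscopy
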